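/- arXiv:2102.02883 — 2 statements merged into one kernel-verified Lean document; each statement's English description precedes it below -/
import Mathlib

section
/- Let E be positive definite, c ∈ R^n nonzero, θ ∈ R, and suppose p₁ lies on the cone C(c,−c,θ,E) with p₁ ≠ c. Define p₋₁ := −E⁻¹ρ(Ec)E p₁, where ρ(z) := I − 2zz^T/‖z‖². Then p₋₁ also lies on C(c,−c,θ,E) and p₋₁ ≠ c. -/
open Matrix

/-- Euclidean norm of a vector, `‖v‖ = √(v ⬝ᵥ v)`. -/
noncomputable def euclidNorm {n : ℕ} (v : Fin n → ℝ) : ℝ := Real.sqrt (v ⬝ᵥ v)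

/-- Householder reflector `ρ(z) = I - 2zzᵀ/‖z‖²`. -/
noncomputable def reflector {n : ℕ} (z : Fin n → ℝ) : Matrix (Fin n) (Fin n) ℝ :=
  1 - (2 * (z ⬝ᵥ z)⁻¹) • vecMulVec z z

lemma vecMulVec_mulVec' {n : ℕ} (z w : Fin n → ℝ) :
    vecMulVec z z *ᵥ w = (z ⬝ᵥ w) • z := by
  funext i
  simp only [mulVec, vecMulVec_apply, dotProduct, Pi.smul_apply, smul_eq_mul,
    Finset.sum_mul, Finset.mul_sum]
  apply Finset.sum_congr rfl
  intro j _
  ring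

lemma reflector_apply {n : ℕ} (z w : Fin n → ℝ) :
    reflector z *ᵥ w = w - ((2 * (z ⬝ᵥ z)⁻¹) * (z ⬝ᵥ w)) • z := by
  simp [reflector, sub_mulVec, smul_mulVec, vecMulVec_mulVec', smul_smul]

/-- If `p₁` lies on the cone `C(c,-c,θ,E)` and `p₁ ≠ c`, so does
`p₋₁ := -E⁻¹ ρ(Ec) E p₁`. -/
theorem reflected_point_on_cone {n : ℕ} (E : Matrix (Fin n) (Fin n) ℝ) (hE : E.PosDef)
    (c : Fin n → ℝ) (hc : c ≠ 0) (θ : ℝ) (p₁ : Fin n → ℝ) (hp₁c : p₁ ≠ c)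
    (hnorm : euclidNorm (E *ᵥ (p₁ - c)) ≠ 0)
    (hcone : Real.cos θ * euclidNorm (E *ᵥ c) * euclidNorm (E *ᵥ (p₁ - c))
      = -(c ⬝ᵥ ((E * E) *ᵥ (p₁ - c))))
    (pm : Fin n → ℝ) (hpm : pm = -(E⁻¹ *ᵥ (reflector (E *ᵥ c) *ᵥ (E *ᵥ p₁)))) :
    Real.cos θ * euclidNorm (E *ᵥ c) * euclidNorm (E *ᵥ (pm - c)) = -(c ⬝ᵥ ((E * E) *ᵥ (pm - c)))
      ∧ pm ≠ c := by
  have hdet : IsUnit E.det := isUnit_iff_ne_zero.mpr (ne_of_gt hE.det_pos)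
  set z : Fin n → ℝ := E *ᵥ c with hz
  set u : Fin n → ℝ := E *ᵥ (p₁ - c) with hu
  -- z ≠ 0
  have hzne : z ≠ 0 := by
    intro h
    apply hc
    have := congrArg (E⁻¹ *ᵥ ·) h
    simpa [hz, mulVec_mulVec, Matrix.nonsing_inv_mul E hdet] using this
  have hs : (z ⬝ᵥ z) ≠ 0 := fun h => hzne (by simpa using h)
  set s : ℝ := z ⬝ᵥ z with hsdef
  -- E *ᵥ (pm - c) = -(reflector z *ᵥ u)
  have hq : E *ᵥ p₁ = u + z := by
    simp [hu, hz, mulVec_sub]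
  have hEpm : E *ᵥ pm = -(reflector z *ᵥ (E *ᵥ p₁)) := by
    rw [hpm, mulVec_neg, mulVec_mulVec, Matrix.mul_nonsing_inv E hdet, one_mulVec]
  have key : E *ᵥ (pm - c) = -(reflector z *ᵥ u) := by
    rw [mulVec_sub, hEpm, hq, reflector_apply, reflector_apply]
    have hzq : z ⬝ᵥ (u + z) = z ⬝ᵥ u + s := by simp [dotProduct_add, hsdef]
    rw [hzq]
    have : (2 * s⁻¹ * (z ⬝ᵥ u + s)) = 2 * s⁻¹ * (z ⬝ᵥ u) + 2 := by
      field_simp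
    rw [this]
    funext i
    simp only [Pi.sub_apply, Pi.neg_apply, Pi.add_apply, Pi.smul_apply, smul_eq_mul]
    ring
  -- dot product facts
  have hW : ∀ w : Fin n → ℝ, c ⬝ᵥ ((E * E) *ᵥ w) = z ⬝ᵥ (E *ᵥ w) := by
    intro w
    rw [← mulVec_mulVec, dotProduct_mulVec c E, hz]
    congr 1
    rw [← mulVec_transpose]
    rw [(by simpa [Matrix.IsSymm] using hE.1 : Eᵀ = E)]
  set t : ℝ := 2 * s⁻¹ * (z ⬝ᵥ u) with ht
  have hzru : z ⬝ᵥ -(reflector z *ᵥ u) = z ⬝ᵥ u := by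
    rw [reflector_apply]
    simp only [dotProduct_neg, dotProduct_sub, dotProduct_smul, smul_eq_mul, ← hsdef, ← ht]
    have : t * s = 2 * (z ⬝ᵥ u) := by rw [ht]; field_simp
    rw [this]; ring
  have hnormeq : (-(reflector z *ᵥ u)) ⬝ᵥ (-(reflector z *ᵥ u)) = u ⬝ᵥ u := by
    rw [reflector_apply]
    simp only [neg_dotProduct, dotProduct_neg, neg_neg, sub_dotProduct, dotProduct_sub,
      smul_dotProduct, dotProduct_smul, smul_eq_mul, ← hsdef, ← ht]
    have h1 : z ⬝ᵥ u = u ⬝ᵥ z := dotProduct_comm z u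
    have h2 : t * s = 2 * (z ⬝ᵥ u) := by rw [ht]; field_simp
    linear_combination t * h1 + t * h2
  have hune : u ≠ 0 := by
    intro h
    apply hnorm
    simp [euclidNorm, ← hu, h]
  constructor
  · have henorm : euclidNorm (-(reflector z *ᵥ u)) = euclidNorm u := by
      simp [euclidNorm, hnormeq]
    rw [hW, key, hzru, henorm, hcone, hW, ← hu]
  · intro h
    have h0 : E *ᵥ (pm - c) = 0 := by rw [h]; simp
    rw [key, neg_eq_zero] at h0
    have hzu : z ⬝ᵥ u = 0 := by
      have := hzru
      rw [h0] at this
      simpa using this.symm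
    have : u = 0 := by
      have := reflector_apply z u
      rw [h0, hzu] at this
      simpa using this.symm
    exact hune this
end

section
/- If two unit vectors v₁, v₂ in R^n satisfy v₁^T v₂ = cos(2θ) with 0 < 2ψ̄ < 2θ ≤ π, then, for any c ∈ R^n and positive definite E, the union of the closed exteriors of the two cones C(c, E⁻¹v₁, ψ̄, E) and C(c, E⁻¹v₂, ψ̄, E) covers all of R^n; equivalently, the intersection of the two closed cone interiors is {c}, whose complement is covered by the union of the strict exteriors. -/
open Matrix

/-- Euclidean norm of a vector, `‖v‖ = √(v ⬝ᵥ v)`. -/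
noncomputable def vecEnorm {n : ℕ} (v : Fin n → ℝ) : ℝ := Real.sqrt (v ⬝ᵥ v)

/-- Closed exterior of the cone:
`C_≥(c,v,ψ,E) = {x : cos ψ ‖Ev‖ ‖E(x-c)‖ ≥ vᵀE²(x-c)}`. -/
noncomputable def coneGe {n : ℕ} (c v : Fin n → ℝ) (ψ : ℝ) (E : Matrix (Fin n) (Fin n) ℝ) :
    Set (Fin n → ℝ) :=
  {x | v ⬝ᵥ ((E * E) *ᵥ (x - c)) ≤ Real.cos ψ * vecEnorm (E *ᵥ v) * vecEnorm (E *ᵥ (x - c))}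

lemma dot_cauchy {n : ℕ} (x y : Fin n → ℝ) : (x ⬝ᵥ y)^2 ≤ (x ⬝ᵥ x) * (y ⬝ᵥ y) := by
  simpa [dotProduct, sq] using Finset.sum_mul_sq_le_sq_mul_sq Finset.univ x y

lemma dot_self_nonneg {n : ℕ} (x : Fin n → ℝ) : 0 ≤ x ⬝ᵥ x :=
  Finset.sum_nonneg fun i _ => mul_self_nonneg _

set_option maxHeartbeats 1000000 in
lemma key_scalar {n : ℕ} (v₁ v₂ y : Fin n → ℝ) (hv₁ : v₁ ⬝ᵥ v₁ = 1) (hv₂ : v₂ ⬝ᵥ v₂ = 1)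
    (ψ θ : ℝ) (hc0 : 0 ≤ Real.cos θ) (hlt : Real.cos θ < Real.cos ψ)
    (hangle : v₁ ⬝ᵥ v₂ = Real.cos (2 * θ))
    (h1 : Real.cos ψ * Real.sqrt (y ⬝ᵥ y) < v₁ ⬝ᵥ y)
    (h2 : Real.cos ψ * Real.sqrt (y ⬝ᵥ y) < v₂ ⬝ᵥ y) : False := by
  set c := Real.cos ψ with hc
  have hcpos : 0 < c := lt_of_le_of_lt hc0 hlt
  set r := Real.sqrt (y ⬝ᵥ y) with hr
  have hr0 : 0 ≤ r := Real.sqrt_nonneg _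
  have hrpos : 0 < r := by
    rcases hr0.lt_or_eq with h | h
    · exact h
    · exfalso
      have hyy : y ⬝ᵥ y = 0 :=
        le_antisymm (Real.sqrt_eq_zero'.mp h.symm) (dot_self_nonneg y)
      have hcau := dot_cauchy v₁ y
      rw [hyy, mul_zero] at hcau
      have h0 : v₁ ⬝ᵥ y = 0 := by nlinarith [sq_nonneg (v₁ ⬝ᵥ y)]
      rw [h0, ← h, mul_zero] at h1
      exact lt_irrefl _ h1
  have hr2 : r * r = y ⬝ᵥ y := Real.mul_self_sqrt (dot_self_nonneg y)
  set w : Fin n → ℝ := r⁻¹ • y with hw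
  have hww : w ⬝ᵥ w = 1 := by
    rw [hw, smul_dotProduct, dotProduct_smul, smul_eq_mul, smul_eq_mul, ← hr2]
    field_simp
  set a := v₁ ⬝ᵥ w with ha
  set b := v₂ ⬝ᵥ w with hb
  have hac : c < a := by
    rw [ha, hw, dotProduct_smul, smul_eq_mul, inv_mul_eq_div, lt_div_iff₀ hrpos]
    exact h1
  have hbc : c < b := by
    rw [hb, hw, dotProduct_smul, smul_eq_mul, inv_mul_eq_div, lt_div_iff₀ hrpos]
    exact h2
  have hwv₁ : w ⬝ᵥ v₁ = a := by rw [dotProduct_comm, ← ha]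
  have hwv₂ : w ⬝ᵥ v₂ = b := by rw [dotProduct_comm, ← hb]
  set s : Fin n → ℝ := v₁ - a • w with hs
  set t : Fin n → ℝ := v₂ - b • w with ht
  have hss : s ⬝ᵥ s = 1 - a ^ 2 := by
    rw [hs]
    simp only [sub_dotProduct, dotProduct_sub, smul_dotProduct, dotProduct_smul, smul_eq_mul,
      hv₁, hww, ← ha, hwv₁]
    ring
  have htt : t ⬝ᵥ t = 1 - b ^ 2 := by
    rw [ht]
    simp only [sub_dotProduct, dotProduct_sub, smul_dotProduct, dotProduct_smul, smul_eq_mul,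
      hv₂, hww, ← hb, hwv₂]
    ring
  have hst : s ⬝ᵥ t = v₁ ⬝ᵥ v₂ - a * b := by
    rw [hs, ht]
    simp only [sub_dotProduct, dotProduct_sub, smul_dotProduct, dotProduct_smul, smul_eq_mul,
      hww, ← ha, ← hb, hwv₂]
    ring
  have hcau := dot_cauchy s t
  rw [hss, htt, hst] at hcau
  have ha1 : a ^ 2 ≤ 1 := by nlinarith [dot_self_nonneg s, hss]
  have hb1 : b ^ 2 ≤ 1 := by nlinarith [dot_self_nonneg t, htt]
  set p := v₁ ⬝ᵥ v₂ with hp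
  have hcos2 : Real.cos (2 * θ) = 2 * Real.cos θ ^ 2 - 1 := Real.cos_two_mul θ
  rw [hcos2] at hangle
  set q := Real.cos θ with hq
  clear_value c r a b p q w s t
  clear hs ht hw hss htt hst h1 h2 hwv₁ hwv₂ hww hr2 hr hc hq hp ha hb
  clear s t w v₁ v₂ y hv₁ hv₂
  -- now pure arithmetic
  have hc1 : c ^ 2 ≤ 1 := by nlinarith
  have h1a : 0 ≤ 1 - a ^ 2 := by linarith
  have h1b : 0 ≤ 1 - b ^ 2 := by linarith
  have hca : c ^ 2 < a ^ 2 := by nlinarith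
  have hcb : c ^ 2 < b ^ 2 := by nlinarith
  have hbound : (1 - a ^ 2) * (1 - b ^ 2) ≤ (1 - c ^ 2) ^ 2 := by nlinarith
  have hfin : -(1 - c ^ 2) ≤ p - a * b := by nlinarith [sq_nonneg (p - a * b + (1 - c^2))]
  nlinarith

/-- The closed exteriors of two cones with axes `E⁻¹v₁`, `E⁻¹v₂` separated by angle `2θ`
and half-apertures `ψ̄ < θ` cover all of `ℝⁿ`. -/
theorem cone_exteriors_cover {n : ℕ} (v₁ v₂ : Fin n → ℝ)
    (hv₁ : v₁ ⬝ᵥ v₁ = 1) (hv₂ : v₂ ⬝ᵥ v₂ = 1) (θ : ℝ)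
    (hangle : v₁ ⬝ᵥ v₂ = Real.cos (2 * θ)) (hθπ : 2 * θ ≤ Real.pi)
    (ψb : ℝ) (hψb₀ : 0 < ψb) (hψb : ψb < θ)
    (c : Fin n → ℝ) (E : Matrix (Fin n) (Fin n) ℝ) (hE : E.PosDef) :
    coneGe c (E⁻¹ *ᵥ v₁) ψb E ∪ coneGe c (E⁻¹ *ᵥ v₂) ψb E = Set.univ := by
  have hT : Eᵀ = E := by simpa using hE.isHermitian.eq
  have hinv : E * E⁻¹ = 1 := Matrix.mul_nonsing_inv E hE.det_pos.ne'.isUnit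
  have e1 : ∀ v : Fin n → ℝ, E *ᵥ (E⁻¹ *ᵥ v) = v := by
    intro v
    rw [Matrix.mulVec_mulVec, hinv, Matrix.one_mulVec]
  have hvm : ∀ x : Fin n → ℝ, x ᵥ* E = E *ᵥ x := by
    intro x
    rw [← hT, Matrix.mulVec_transpose, hT]
  have e2 : ∀ (v u : Fin n → ℝ),
      (E⁻¹ *ᵥ v) ⬝ᵥ ((E * E) *ᵥ u) = v ⬝ᵥ (E *ᵥ u) := by
    intro v u
    rw [← Matrix.mulVec_mulVec, Matrix.dotProduct_mulVec, hvm, e1]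
  ext x
  simp only [Set.mem_union, Set.mem_univ, iff_true, coneGe, Set.mem_setOf_eq]
  by_contra h
  push_neg at h
  obtain ⟨h1, h2⟩ := h
  rw [e1, e2] at h1 h2
  have hen₁ : vecEnorm v₁ = 1 := by rw [vecEnorm, hv₁, Real.sqrt_one]
  have hen₂ : vecEnorm v₂ = 1 := by rw [vecEnorm, hv₂, Real.sqrt_one]
  rw [hen₁, mul_one] at h1
  rw [hen₂, mul_one] at h2
  have hc0 : 0 ≤ Real.cos θ :=
    Real.cos_nonneg_of_mem_Icc ⟨by linarith [Real.pi_pos], by linarith⟩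
  have hlt : Real.cos θ < Real.cos ψb :=
    Real.cos_lt_cos_of_nonneg_of_le_pi hψb₀.le (by linarith [Real.pi_pos]) hψb
  exact key_scalar v₁ v₂ (E *ᵥ (x - c)) hv₁ hv₂ ψb θ hc0 hlt hangle
    (by simpa [vecEnorm] using h1) (by simpa [vecEnorm] using h2)
end
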